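/- Let R be a ring, M a right R-module, and W = End_R(M). (1) For every anti-endomorphism α of W and every inner automorphism φ of W, the double R-modules K_α and K_{φ∘α} are isomorphic. (2) Conversely, if α and β are anti-endomorphisms of W such that b_α and b_β are both right regular and K_α ≅ K_β as double R-modules, then β = φ ∘ α for some inner automorphism φ of W. -/

import Mathlib

open MulOpposite TensorProduct Function

universe u v w v'

section Core

/-- An anti-endomorphism of a ring: additive, unital, reverses multiplication. -/
def IsAntiEndo {W : Type*} [Ring W] (α : W → W) : Prop :=
  (∀ u v : W, α (u + v) = α u + α v) ∧ α 1 = 1 ∧ ∀ u v : W, α (u * v) = α v * α u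

/-- An anti-automorphism of a ring: a bijective anti-endomorphism. -/
def IsAntiAuto {W : Type*} [Ring W] (α : W → W) : Prop :=
  IsAntiEndo α ∧ Function.Bijective α

/-- An inner automorphism of a ring: conjugation by a unit. -/
def IsInnerAut {W : Type*} [Ring W] (φ : W → W) : Prop :=
  ∃ u : Wˣ, ∀ w : W, φ w = ↑u * w * ↑u⁻¹

variable (R : Type u) [Ring R]

/-- A double `R`-module structure on the additive group `K`: two commuting
right `R`-module structures `m0` and `m1`. -/
structure DoubleModule (K : Type v) [AddCommGroup K] where
  m0 : K → R → K
  m1 : K → R → K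
  m0_add_left : ∀ (k k' : K) (r : R), m0 (k + k') r = m0 k r + m0 k' r
  m0_add_right : ∀ (k : K) (r r' : R), m0 k (r + r') = m0 k r + m0 k r'
  m0_mul : ∀ (k : K) (r r' : R), m0 k (r * r') = m0 (m0 k r) r'
  m0_one : ∀ k : K, m0 k 1 = k
  m1_add_left : ∀ (k k' : K) (r : R), m1 (k + k') r = m1 k r + m1 k' r
  m1_add_right : ∀ (k : K) (r r' : R), m1 k (r + r') = m1 k r + m1 k r'
  m1_mul : ∀ (k : K) (r r' : R), m1 k (r * r') = m1 (m1 k r) r'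
  m1_one : ∀ k : K, m1 k 1 = k
  comm : ∀ (k : K) (a b : R), m1 (m0 k a) b = m0 (m1 k b) a

variable {R}

/-- A homomorphism of double `R`-modules. -/
def IsDoubleHom {K : Type v} {K' : Type w} [AddCommGroup K] [AddCommGroup K']
    (DK : DoubleModule R K) (DK' : DoubleModule R K') (f : K → K') : Prop :=
  (∀ k k' : K, f (k + k') = f k + f k') ∧
  (∀ (k : K) (r : R), f (DK.m0 k r) = DK'.m0 (f k) r) ∧
  (∀ (k : K) (r : R), f (DK.m1 k r) = DK'.m1 (f k) r)

/-- An isomorphism of double `R`-modules. -/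
def IsDoubleIso {K : Type v} {K' : Type w} [AddCommGroup K] [AddCommGroup K']
    (DK : DoubleModule R K) (DK' : DoubleModule R K') (f : K → K') : Prop :=
  IsDoubleHom DK DK' f ∧ Function.Bijective f

/-- An anti-automorphism of a double `R`-module: an additive bijection exchanging
the two module structures. -/
def IsDoubleAntiAuto {K : Type v} [AddCommGroup K] (DK : DoubleModule R K) (θ : K → K) : Prop :=
  Function.Bijective θ ∧ (∀ k k' : K, θ (k + k') = θ k + θ k') ∧
  (∀ (k : K) (r : R), θ (DK.m0 k r) = DK.m1 (θ k) r) ∧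
  (∀ (k : K) (r : R), θ (DK.m1 k r) = DK.m0 (θ k) r)

variable (R)

/-- A general bilinear form on a right `R`-module `M` (encoded as a module over `Rᵐᵒᵖ`)
with values in a double `R`-module `(K, DK)`. -/
structure GBF (M : Type v) [AddCommGroup M] [Module Rᵐᵒᵖ M]
    (K : Type w) [AddCommGroup K] (DK : DoubleModule R K) where
  b : M → M → K
  add_left : ∀ x x' y : M, b (x + x') y = b x y + b x' y
  add_right : ∀ x y y' : M, b x (y + y') = b x y + b x y'
  smul_left : ∀ (x y : M) (r : R), b (op r • x) y = DK.m0 (b x y) r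
  smul_right : ∀ (x y : M) (r : R), b x (op r • y) = DK.m1 (b x y) r

variable {R}

namespace GBF

variable {M : Type v} [AddCommGroup M] [Module Rᵐᵒᵖ M]
  {K : Type w} [AddCommGroup K] {DK : DoubleModule R K}

/-- The right adjoint of `β` is injective. -/
def RightInjective (β : GBF R M K DK) : Prop :=
  ∀ x x' : M, (∀ y : M, β.b y x = β.b y x') → x = x'

/-- The right adjoint of `β` is bijective onto `Hom_R(M, K₀)`. -/
def RightRegular (β : GBF R M K DK) : Prop :=
  β.RightInjective ∧
  ∀ f : M → K, (∀ y y' : M, f (y + y') = f y + f y') →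
    (∀ (y : M) (r : R), f (op r • y) = DK.m0 (f y) r) →
    ∃ x : M, ∀ y : M, f y = β.b y x

/-- The left adjoint of `β` is injective. -/
def LeftInjective (β : GBF R M K DK) : Prop :=
  ∀ x x' : M, (∀ y : M, β.b x y = β.b x' y) → x = x'

/-- The left adjoint of `β` is bijective onto `Hom_R(M, K₁)`. -/
def LeftRegular (β : GBF R M K DK) : Prop :=
  β.LeftInjective ∧
  ∀ f : M → K, (∀ y y' : M, f (y + y') = f y + f y') →
    (∀ (y : M) (r : R), f (op r • y) = DK.m1 (f y) r) →
    ∃ x : M, ∀ y : M, f y = β.b x y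

/-- `α` is an adjoint anti-endomorphism for `β`: `β(w x, y) = β(x, α(w) y)`. -/
def IsAdjoint (β : GBF R M K DK) (α : Module.End Rᵐᵒᵖ M → Module.End Rᵐᵒᵖ M) : Prop :=
  ∀ (w : Module.End Rᵐᵒᵖ M) (x y : M), β.b (w x) y = β.b x (α w y)

/-- Similarity of general bilinear forms on the same module. -/
def Similar {K' : Type v'} [AddCommGroup K'] {DK' : DoubleModule R K'}
    (β : GBF R M K DK) (β' : GBF R M K' DK') : Prop :=
  ∃ f : K → K', IsDoubleIso DK DK' f ∧ ∀ x y : M, β'.b x y = f (β.b x y)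

end GBF

section Kalpha

variable {M : Type v} [AddCommGroup M] [Module Rᵐᵒᵖ M]

/-- The subgroup of `M ⊗_ℤ M` generated by the elements `(w x) ⊗ y - x ⊗ (α w y)`. -/
def kalphaRel (α : Module.End Rᵐᵒᵖ M → Module.End Rᵐᵒᵖ M) : Submodule ℤ (M ⊗[ℤ] M) :=
  Submodule.span ℤ
    {z | ∃ (w : Module.End Rᵐᵒᵖ M) (x y : M), z = (w x) ⊗ₜ[ℤ] y - x ⊗ₜ[ℤ] (α w y)}

/-- `K_α`, the quotient of `M ⊗_ℤ M` by the relations `(w x) ⊗ y = x ⊗ (α w y)`. -/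
abbrev Kalpha (α : Module.End Rᵐᵒᵖ M → Module.End Rᵐᵒᵖ M) : Type _ :=
  (M ⊗[ℤ] M) ⧸ kalphaRel α

/-- The map `x ⊗ y ↦ (x·r) ⊗ y` on `M ⊗_ℤ M`. -/
noncomputable def smulLeftMap (r : R) : (M ⊗[ℤ] M) →ₗ[ℤ] (M ⊗[ℤ] M) :=
  TensorProduct.map ((DistribMulAction.toAddMonoidHom M (op r : Rᵐᵒᵖ)).toIntLinearMap)
    LinearMap.id

/-- The map `x ⊗ y ↦ x ⊗ (y·r)` on `M ⊗_ℤ M`. -/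
noncomputable def smulRightMap (r : R) : (M ⊗[ℤ] M) →ₗ[ℤ] (M ⊗[ℤ] M) :=
  TensorProduct.map LinearMap.id
    ((DistribMulAction.toAddMonoidHom M (op r : Rᵐᵒᵖ)).toIntLinearMap)

theorem kalphaRel_le_left (α : Module.End Rᵐᵒᵖ M → Module.End Rᵐᵒᵖ M) (r : R) :
    kalphaRel α ≤ (kalphaRel α).comap (smulLeftMap (M := M) r) := by
  rw [kalphaRel, Submodule.span_le]
  rintro _ ⟨w, x, y, rfl⟩
  rw [SetLike.mem_coe, Submodule.mem_comap, map_sub]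
  have h1 : smulLeftMap (M := M) r ((w x) ⊗ₜ[ℤ] y) = (w (op r • x)) ⊗ₜ[ℤ] y := by
    exact (TensorProduct.map_tmul _ _ _ _).trans (by simp [map_smul])
  have h2 : smulLeftMap (M := M) r (x ⊗ₜ[ℤ] (α w y)) = (op r • x) ⊗ₜ[ℤ] (α w y) := by
    exact (TensorProduct.map_tmul _ _ _ _).trans (by simp)
  rw [h1, h2]
  exact Submodule.subset_span ⟨w, op r • x, y, rfl⟩

theorem kalphaRel_le_right (α : Module.End Rᵐᵒᵖ M → Module.End Rᵐᵒᵖ M) (r : R) :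
    kalphaRel α ≤ (kalphaRel α).comap (smulRightMap (M := M) r) := by
  rw [kalphaRel, Submodule.span_le]
  rintro _ ⟨w, x, y, rfl⟩
  rw [SetLike.mem_coe, Submodule.mem_comap, map_sub]
  have h1 : smulRightMap (M := M) r ((w x) ⊗ₜ[ℤ] y) = (w x) ⊗ₜ[ℤ] (op r • y) := by
    exact (TensorProduct.map_tmul _ _ _ _).trans (by simp)
  have h2 : smulRightMap (M := M) r (x ⊗ₜ[ℤ] (α w y)) = x ⊗ₜ[ℤ] (α w (op r • y)) := by
    exact (TensorProduct.map_tmul _ _ _ _).trans (by simp [map_smul])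
  rw [h1, h2]
  exact Submodule.subset_span ⟨w, x, op r • y, rfl⟩

/-- The `m0`-action on `K_α`. -/
noncomputable def kSmul0 (α : Module.End Rᵐᵒᵖ M → Module.End Rᵐᵒᵖ M) (r : R) :
    Kalpha α →ₗ[ℤ] Kalpha α :=
  Submodule.mapQ _ _ (smulLeftMap r) (kalphaRel_le_left α r)

/-- The `m1`-action on `K_α`. -/
noncomputable def kSmul1 (α : Module.End Rᵐᵒᵖ M → Module.End Rᵐᵒᵖ M) (r : R) :
    Kalpha α →ₗ[ℤ] Kalpha α :=
  Submodule.mapQ _ _ (smulRightMap r) (kalphaRel_le_right α r)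

theorem kSmul0_mk (α : Module.End Rᵐᵒᵖ M → Module.End Rᵐᵒᵖ M) (r : R) (t : M ⊗[ℤ] M) :
    kSmul0 α r (Submodule.Quotient.mk t) = Submodule.Quotient.mk (smulLeftMap r t) := rfl

theorem kSmul1_mk (α : Module.End Rᵐᵒᵖ M → Module.End Rᵐᵒᵖ M) (r : R) (t : M ⊗[ℤ] M) :
    kSmul1 α r (Submodule.Quotient.mk t) = Submodule.Quotient.mk (smulRightMap r t) := rfl

/-- The double `R`-module structure on `K_α`. -/
noncomputable def KalphaDM (α : Module.End Rᵐᵒᵖ M → Module.End Rᵐᵒᵖ M) :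
    DoubleModule R (Kalpha α) where
  m0 k r := kSmul0 α r k
  m1 k r := kSmul1 α r k
  m0_add_left k k' r := map_add _ k k'
  m0_add_right := by
    intro k r r'
    try dsimp only
    induction k using Submodule.Quotient.induction_on with
    | _ t =>
      rw [kSmul0_mk, kSmul0_mk, kSmul0_mk, ← Submodule.Quotient.mk_add]
      congr 1
      induction t with
      | zero => simp
      | tmul x y => (repeat erw [TensorProduct.map_tmul]); simp [smulLeftMap, op_add, add_smul, TensorProduct.add_tmul]
      | add a b ha hb => rw [map_add, map_add, map_add, ha, hb]; abel
  m0_mul := by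
    intro k r r'
    try dsimp only
    induction k using Submodule.Quotient.induction_on with
    | _ t =>
      rw [kSmul0_mk, kSmul0_mk, kSmul0_mk]
      congr 1
      induction t with
      | zero => simp
      | tmul x y => (repeat erw [TensorProduct.map_tmul]); simp [smulLeftMap, op_mul, mul_smul]
      | add a b ha hb => rw [map_add, map_add, map_add, ha, hb]
  m0_one := by
    intro k
    try dsimp only
    induction k using Submodule.Quotient.induction_on with
    | _ t =>
      rw [kSmul0_mk]
      congr 1
      induction t with
      | zero => simp
      | tmul x y => (repeat erw [TensorProduct.map_tmul]); simp [smulLeftMap]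
      | add a b ha hb => rw [map_add, ha, hb]
  m1_add_left k k' r := map_add _ k k'
  m1_add_right := by
    intro k r r'
    try dsimp only
    induction k using Submodule.Quotient.induction_on with
    | _ t =>
      rw [kSmul1_mk, kSmul1_mk, kSmul1_mk, ← Submodule.Quotient.mk_add]
      congr 1
      induction t with
      | zero => simp
      | tmul x y => (repeat erw [TensorProduct.map_tmul]); simp [smulRightMap, op_add, add_smul, TensorProduct.tmul_add]
      | add a b ha hb => rw [map_add, map_add, map_add, ha, hb]; abel
  m1_mul := by
    intro k r r'
    try dsimp only
    induction k using Submodule.Quotient.induction_on with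
    | _ t =>
      rw [kSmul1_mk, kSmul1_mk, kSmul1_mk]
      congr 1
      induction t with
      | zero => simp
      | tmul x y => (repeat erw [TensorProduct.map_tmul]); simp [smulRightMap, op_mul, mul_smul]
      | add a b ha hb => rw [map_add, map_add, map_add, ha, hb]
  m1_one := by
    intro k
    try dsimp only
    induction k using Submodule.Quotient.induction_on with
    | _ t =>
      rw [kSmul1_mk]
      congr 1
      induction t with
      | zero => simp
      | tmul x y => (repeat erw [TensorProduct.map_tmul]); simp [smulRightMap]
      | add a b ha hb => rw [map_add, ha, hb]
  comm := by
    intro k a c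
    try dsimp only
    induction k using Submodule.Quotient.induction_on with
    | _ t =>
      rw [kSmul0_mk, kSmul1_mk, kSmul1_mk, kSmul0_mk]
      congr 1
      induction t with
      | zero => simp
      | tmul x y => (repeat erw [TensorProduct.map_tmul]); try simp [smulLeftMap, smulRightMap]
      | add p q hp hq => rw [map_add, map_add, map_add, map_add, hp, hq]

/-- The universal general bilinear form `b_α : M × M → K_α`. -/
noncomputable def balpha (α : Module.End Rᵐᵒᵖ M → Module.End Rᵐᵒᵖ M) :
    GBF R M (Kalpha α) (KalphaDM α) where
  b x y := Submodule.Quotient.mk (x ⊗ₜ[ℤ] y)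
  add_left x x' y := by
    try dsimp only
    rw [TensorProduct.add_tmul, Submodule.Quotient.mk_add]
  add_right x y y' := by
    try dsimp only
    rw [TensorProduct.tmul_add, Submodule.Quotient.mk_add]
  smul_left x y r := by
    show _ = kSmul0 α r (Submodule.Quotient.mk (x ⊗ₜ[ℤ] y))
    rw [kSmul0_mk]
    congr 1
  smul_right x y r := by
    show _ = kSmul1 α r (Submodule.Quotient.mk (x ⊗ₜ[ℤ] y))
    rw [kSmul1_mk]
    congr 1

end Kalpha

end Core

section Aux2
variable {R : Type u} [Ring R] {M : Type v} [AddCommGroup M] [Module Rᵐᵒᵖ M]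

theorem balpha_adj (α : Module.End Rᵐᵒᵖ M → Module.End Rᵐᵒᵖ M)
    (w : Module.End Rᵐᵒᵖ M) (x y : M) :
    (balpha (R := R) α).b (w x) y = (balpha α).b x (α w y) := by
  show (Submodule.Quotient.mk _ : Kalpha α) = Submodule.Quotient.mk _
  rw [Submodule.Quotient.eq]
  exact Submodule.subset_span ⟨w, x, y, rfl⟩

/-- The map `x ⊗ y ↦ x ⊗ (u y)` on `M ⊗[ℤ] M`. -/
noncomputable def endMap (u : Module.End Rᵐᵒᵖ M) : (M ⊗[ℤ] M) →ₗ[ℤ] (M ⊗[ℤ] M) :=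
  TensorProduct.map LinearMap.id u.toAddMonoidHom.toIntLinearMap

theorem endMap_tmul (u : Module.End Rᵐᵒᵖ M) (x y : M) :
    endMap u (x ⊗ₜ[ℤ] y) = x ⊗ₜ[ℤ] (u y) := rfl

theorem kalphaRel_le_comap_endMap (α β : Module.End Rᵐᵒᵖ M → Module.End Rᵐᵒᵖ M)
    (u : Module.End Rᵐᵒᵖ M) (h : ∀ w y, u (α w y) = β w (u y)) :
    kalphaRel α ≤ (kalphaRel β).comap (endMap u) := by
  rw [kalphaRel, Submodule.span_le]
  rintro _ ⟨w, x, y, rfl⟩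
  rw [SetLike.mem_coe, Submodule.mem_comap, map_sub, endMap_tmul, endMap_tmul, h]
  exact Submodule.subset_span ⟨w, x, u y, rfl⟩

theorem endMap_comm_left (u : Module.End Rᵐᵒᵖ M) (r : R) (t : M ⊗[ℤ] M) :
    endMap u (smulLeftMap r t) = smulLeftMap r (endMap u t) := by
  induction t with
  | zero => simp
  | tmul x y => rfl
  | add a b ha hb => rw [map_add, map_add, map_add, map_add, ha, hb]

theorem endMap_comm_right (u : Module.End Rᵐᵒᵖ M) (r : R) (t : M ⊗[ℤ] M) :
    endMap u (smulRightMap r t) = smulRightMap r (endMap u t) := by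
  induction t with
  | zero => simp
  | tmul x y =>
      show x ⊗ₜ[ℤ] (u (op r • y)) = x ⊗ₜ[ℤ] (op r • (u y))
      rw [map_smul]
  | add a b ha hb => rw [map_add, map_add, map_add, map_add, ha, hb]

/-- The induced map `K_α → K_β`. -/
noncomputable def kalphaMap (α β : Module.End Rᵐᵒᵖ M → Module.End Rᵐᵒᵖ M)
    (u : Module.End Rᵐᵒᵖ M) (h : ∀ w y, u (α w y) = β w (u y)) :
    Kalpha α →ₗ[ℤ] Kalpha β :=
  Submodule.mapQ _ _ (endMap u) (kalphaRel_le_comap_endMap α β u h)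

theorem kalphaMap_mk (α β : Module.End Rᵐᵒᵖ M → Module.End Rᵐᵒᵖ M)
    (u : Module.End Rᵐᵒᵖ M) (h : ∀ w y, u (α w y) = β w (u y)) (t : M ⊗[ℤ] M) :
    kalphaMap α β u h (Submodule.Quotient.mk t) = Submodule.Quotient.mk (endMap u t) := rfl

end Aux2


/-- For an anti-endomorphism `α` of `W = End_R(M)` and an inner automorphism
`φ` of `W`, `K_α ≅ K_{φ∘α}` as double `R`-modules; conversely, if `b_α` and `b_β` are right
regular and `K_α ≅ K_β`, then `β = φ ∘ α` for some inner automorphism `φ`. -/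
theorem stmt_2 {R : Type u} [Ring R] {M : Type v} [AddCommGroup M] [Module Rᵐᵒᵖ M]
    (α : Module.End Rᵐᵒᵖ M → Module.End Rᵐᵒᵖ M) (hα : IsAntiEndo α) :
    (∀ φ : Module.End Rᵐᵒᵖ M → Module.End Rᵐᵒᵖ M, IsInnerAut φ →
      ∃ f : Kalpha (M := M) α → Kalpha (M := M) (φ ∘ α),
        IsDoubleIso (KalphaDM α) (KalphaDM (φ ∘ α)) f) ∧
    (∀ β : Module.End Rᵐᵒᵖ M → Module.End Rᵐᵒᵖ M, IsAntiEndo β →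
      (balpha α).RightRegular → (balpha β).RightRegular →
      (∃ f : Kalpha (M := M) α → Kalpha (M := M) β,
        IsDoubleIso (KalphaDM α) (KalphaDM β) f) →
      ∃ φ : Module.End Rᵐᵒᵖ M → Module.End Rᵐᵒᵖ M, IsInnerAut φ ∧ β = φ ∘ α) := by
  refine ⟨?_, ?_⟩
  · intro φ hφ
    obtain ⟨u, hu⟩ := hφ
    have hui : ∀ y : M, (↑u⁻¹ : Module.End Rᵐᵒᵖ M) ((↑u : Module.End Rᵐᵒᵖ M) y) = y := by
      intro y
      rw [← Module.End.mul_apply, u.inv_mul, Module.End.one_apply]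
    have hiu : ∀ y : M, (↑u : Module.End Rᵐᵒᵖ M) ((↑u⁻¹ : Module.End Rᵐᵒᵖ M) y) = y := by
      intro y
      rw [← Module.End.mul_apply, u.mul_inv, Module.End.one_apply]
    have h1 : ∀ (w : Module.End Rᵐᵒᵖ M) (y : M),
        (↑u : Module.End Rᵐᵒᵖ M) (α w y) = (φ ∘ α) w ((↑u : Module.End Rᵐᵒᵖ M) y) := by
      intro w y
      simp only [comp_apply, hu, Module.End.mul_apply, hui]
    have h2 : ∀ (w : Module.End Rᵐᵒᵖ M) (y : M),
        (↑u⁻¹ : Module.End Rᵐᵒᵖ M) ((φ ∘ α) w y) = α w ((↑u⁻¹ : Module.End Rᵐᵒᵖ M) y) := by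
      intro w y
      simp only [comp_apply, hu, Module.End.mul_apply, hui]
    refine ⟨kalphaMap α (φ ∘ α) ↑u h1, ⟨⟨map_add _, ?_, ?_⟩, ?_⟩⟩
    · intro k r
      induction k using Submodule.Quotient.induction_on with
      | _ t =>
        show kalphaMap α (φ ∘ α) ↑u h1 (kSmul0 α r (Submodule.Quotient.mk t))
          = kSmul0 (φ ∘ α) r (kalphaMap α (φ ∘ α) ↑u h1 (Submodule.Quotient.mk t))
        rw [kSmul0_mk, kalphaMap_mk, kalphaMap_mk, kSmul0_mk, endMap_comm_left]
    · intro k r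
      induction k using Submodule.Quotient.induction_on with
      | _ t =>
        show kalphaMap α (φ ∘ α) ↑u h1 (kSmul1 α r (Submodule.Quotient.mk t))
          = kSmul1 (φ ∘ α) r (kalphaMap α (φ ∘ α) ↑u h1 (Submodule.Quotient.mk t))
        rw [kSmul1_mk, kalphaMap_mk, kalphaMap_mk, kSmul1_mk, endMap_comm_right]
    · refine Function.bijective_iff_has_inverse.mpr ⟨kalphaMap (φ ∘ α) α ↑u⁻¹ h2, ?_, ?_⟩
      · intro k
        induction k using Submodule.Quotient.induction_on with
        | _ t =>
          rw [kalphaMap_mk, kalphaMap_mk]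
          congr 1
          induction t with
          | zero => simp
          | tmul x y => rw [endMap_tmul, endMap_tmul, hui]
          | add a b ha hb => rw [map_add, map_add, ha, hb]
      · intro k
        induction k using Submodule.Quotient.induction_on with
        | _ t =>
          rw [kalphaMap_mk, kalphaMap_mk]
          congr 1
          induction t with
          | zero => simp
          | tmul x y => rw [endMap_tmul, endMap_tmul, hiu]
          | add a b ha hb => rw [map_add, map_add, ha, hb]
  · intro β hβ hregα hregβ hiso
    obtain ⟨f, ⟨⟨hadd, hm0, hm1⟩, hbij⟩⟩ := hiso
    have hinj := hbij.1
    set e : Kalpha (M := M) α ≃ Kalpha (M := M) β := Equiv.ofBijective f hbij with he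
    have hfe : ∀ z, f (e.symm z) = z := e.apply_symm_apply
    have hef : ∀ z, e.symm (f z) = z := e.symm_apply_apply
    have hsymm_add : ∀ k k', e.symm (k + k') = e.symm k + e.symm k' := by
      intro k k'
      apply hinj
      rw [hfe, hadd, hfe, hfe]
    have hsymm_m0 : ∀ (k : Kalpha (M := M) β) (r : R),
        e.symm ((KalphaDM β).m0 k r) = (KalphaDM α).m0 (e.symm k) r := by
      intro k r
      apply hinj
      rw [hfe, hm0, hfe]
    -- construct σ
    have hexσ : ∀ x : M, ∃ z : M, ∀ y, f ((balpha α).b y x) = (balpha β).b y z := by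
      intro x
      refine hregβ.2 (fun y => f ((balpha α).b y x)) ?_ ?_
      · intro y y'; rw [(balpha α).add_left, hadd]
      · intro y r; rw [(balpha α).smul_left, hm0]
    choose σ hσ using hexσ
    -- construct τ
    have hexτ : ∀ x : M, ∃ z : M, ∀ y, e.symm ((balpha β).b y x) = (balpha α).b y z := by
      intro x
      refine hregα.2 (fun y => e.symm ((balpha β).b y x)) ?_ ?_
      · intro y y'; rw [(balpha β).add_left, hsymm_add]
      · intro y r; rw [(balpha β).smul_left, hsymm_m0]
    choose τ hτ using hexτ
    have hτ' : ∀ x y, f ((balpha α).b y (τ x)) = (balpha β).b y x := by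
      intro x y
      rw [← hτ, hfe]
    have hστ : ∀ x, σ (τ x) = x := by
      intro x
      refine hregβ.1 _ _ fun y => ?_
      rw [← hσ, hτ']
    have hτσ : ∀ x, τ (σ x) = x := by
      intro x
      refine hregα.1 _ _ fun y => ?_
      apply hinj
      rw [hτ', hσ]
    have hσadd : ∀ x x', σ (x + x') = σ x + σ x' := by
      intro x x'
      refine hregβ.1 _ _ fun y => ?_
      rw [← hσ, (balpha α).add_right, hadd, hσ, hσ, ← (balpha β).add_right]
    have hσsmul : ∀ (r : R) (x : M), σ (op r • x) = op r • σ x := by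
      intro r x
      refine hregβ.1 _ _ fun y => ?_
      rw [← hσ, (balpha α).smul_right, hm1, hσ, ← (balpha β).smul_right]
    have hτadd : ∀ x x', τ (x + x') = τ x + τ x' := by
      intro x x'
      refine hregα.1 _ _ fun y => ?_
      apply hinj
      rw [hτ', (balpha β).add_right, (balpha α).add_right, hadd, hτ', hτ']
    have hτsmul : ∀ (r : R) (x : M), τ (op r • x) = op r • τ x := by
      intro r x
      refine hregα.1 _ _ fun y => ?_
      apply hinj
      rw [hτ', (balpha β).smul_right, (balpha α).smul_right, hm1, hτ']
    let σL : Module.End Rᵐᵒᵖ M :=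
      { toFun := σ
        map_add' := hσadd
        map_smul' := fun c x => by
          rw [RingHom.id_apply, ← op_unop c]; exact hσsmul c.unop x }
    let τL : Module.End Rᵐᵒᵖ M :=
      { toFun := τ
        map_add' := hτadd
        map_smul' := fun c x => by
          rw [RingHom.id_apply, ← op_unop c]; exact hτsmul c.unop x }
    let u : (Module.End Rᵐᵒᵖ M)ˣ :=
      ⟨σL, τL, LinearMap.ext fun m => hστ m, LinearMap.ext fun m => hτσ m⟩
    refine ⟨fun w => ↑u * w * ↑u⁻¹, ⟨u, fun w => rfl⟩, ?_⟩
    funext w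
    have key : ∀ n, β w (σ n) = σ (α w n) := by
      intro n
      refine hregβ.1 _ _ fun x => ?_
      rw [← balpha_adj β w x (σ n), ← hσ, balpha_adj α w x n, hσ]
    refine LinearMap.ext fun m => ?_
    show β w m = σL ((α w) (τL m))
    calc β w m = β w (σ (τ m)) := by rw [hστ]
      _ = σ (α w (τ m)) := key (τ m)
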